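/- Let N = (V, E, c) be a symmetric directed network, i.e., for every edge u → v of capacity w there is an edge v → u of the same capacity w, with boundary vertices ∂V ⊆ V. Then for every I ⊆ ∂V the cycle-flow entropy equals the minimum edge cut separating I from ∂V ∖ I: S(I) = min over vertex subsets 𝒱 ⊆ V with 𝒱 ∩ ∂V = I of Σ_{e ∈ E : s(e) ∈ 𝒱, t(e) ∉ 𝒱} c(e). (In particular, the cycle-flow prescription on the directed symmetrization of an undirected weighted graph reproduces the min-cut entropies of the undirected graph model, so all holographic entropy vectors are realized by cycle flows.) -/

import Mathlib

open scoped Classical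

/-- An edge cycle: a nonempty cyclically ordered sequence of distinct directed
edges (each a source-target pair) with the target of each edge equal to the
source of the next (cyclically). -/
structure EdgeCycle (V : Type*) where
  n : ℕ
  npos : 0 < n
  edge : Fin n → V × V
  inj : Function.Injective edge
  chain : ∀ i : Fin n, (edge i).2 = (edge ⟨(i.val + 1) % n, Nat.mod_lt _ npos⟩).1

/-- Membership of a directed edge in an edge cycle. -/
def EdgeCycle.Mem {V : Type*} (C : EdgeCycle V) (e : V × V) : Prop :=
  ∃ i, C.edge i = e

/-- The cycle visits a vertex of `S`: some edge of the cycle has its target in `S`. -/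
def EdgeCycle.Visits {V : Type*} (C : EdgeCycle V) (S : Finset V) : Prop :=
  ∃ i, (C.edge i).2 ∈ S

/-- A simple cycle flow: an edge cycle together with a nonnegative flux. -/
structure CycleFlow (V : Type*) where
  cyc : EdgeCycle V
  flux : ℝ
  flux_nonneg : 0 ≤ flux

/-- The total load that a finite family of simple cycle flows places on the
directed edge `(u, v)`. -/
noncomputable def edgeLoad {V : Type*} (F : List (CycleFlow V)) (u v : V) : ℝ :=
  (F.map (fun C => if C.cyc.Mem (u, v) then C.flux else 0)).sum

/-- A finite family of simple cycle flows is a multi-cycle flow on the network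
with capacity function `c` if on every edge the total load is at most the capacity. -/
def Feasible {V : Type*} (c : V → V → ℝ) (F : List (CycleFlow V)) : Prop :=
  ∀ u v, edgeLoad F u v ≤ c u v

/-- The flux of a multi-cycle flow between two (disjoint) vertex sets `I` and `J`:
the sum of the fluxes of those simple cycle flows visiting both a vertex of `I`
and a vertex of `J`. -/
noncomputable def mflux {V : Type*} (F : List (CycleFlow V)) (I J : Finset V) : ℝ :=
  (F.map (fun C => if C.cyc.Visits I ∧ C.cyc.Visits J then C.flux else 0)).sum

/-- The cycle-flow entropy of a subset `I` of the boundary vertices `bdry`: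
the maximal flux between `I` and its boundary complement over all
multi-cycle flows. -/
noncomputable def entropy {V : Type*} (c : V → V → ℝ) (bdry I : Finset V) : ℝ :=
  sSup { x | ∃ F : List (CycleFlow V), Feasible c F ∧ mflux F I (bdry \ I) = x }

/-- A network is balanced if at every vertex the total capacity of ingoing edges
equals the total capacity of outgoing edges. -/
def BalancedNet {V : Type*} [Fintype V] (c : V → V → ℝ) : Prop :=
  ∀ v : V, (∑ u, c u v) = ∑ u, c v u

/-- The residual capacity function of a network `c` with respect to a
multi-cycle flow `F`. -/
noncomputable def resid {V : Type*} (c : V → V → ℝ) (F : List (CycleFlow V)) : V → V → ℝ :=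
  fun u v => c u v - edgeLoad F u v

/-- `F'` is a multi-cycle subflow of `F`: same edge cycles, smaller fluxes. -/
def Subflow {V : Type*} (F' F : List (CycleFlow V)) : Prop :=
  List.Forall₂ (fun C' C => C'.cyc = C.cyc ∧ C'.flux ≤ C.flux) F' F

/-- The nesting property: for every pair of disjoint boundary subsets `I`, `J`
there is a single multi-cycle flow simultaneously maximizing the flux through
`I` and through `I ∪ J`. -/
def Nesting {V : Type*} (c : V → V → ℝ) (bdry : Finset V) : Prop :=
  ∀ I J : Finset V, I ⊆ bdry → J ⊆ bdry → Disjoint I J →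
    ∃ F : List (CycleFlow V), Feasible c F ∧
      mflux F I (bdry \ I) = entropy c bdry I ∧
      mflux F (I ∪ J) (bdry \ (I ∪ J)) = entropy c bdry (I ∪ J)

set_option linter.unusedSectionVars false

section Aux
variable {V : Type*} [Fintype V] [DecidableEq V]

noncomputable def exc (f : V → V → ℝ) (v : V) : ℝ := (∑ u, f v u) - ∑ u, f u v

noncomputable def fval (I : Finset V) (f : V → V → ℝ) : ℝ := ∑ v ∈ I, exc f v

noncomputable def cutval (c : V → V → ℝ) (W : Finset V) : ℝ := ∑ u ∈ W, ∑ v ∈ Wᶜ, c u v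

structure IsFlow (c : V → V → ℝ) (I J : Finset V) (f : V → V → ℝ) : Prop where
  nonneg : ∀ u v, 0 ≤ f u v
  le_cap : ∀ u v, f u v ≤ c u v
  cons : ∀ v, v ∉ I → v ∉ J → exc f v = 0
  src : ∀ v ∈ I, 0 ≤ exc f v




lemma exc_sum_cut (f : V → V → ℝ) (W : Finset V) :
    ∑ v ∈ W, exc f v = (∑ v ∈ W, ∑ u ∈ Wᶜ, f v u) - ∑ v ∈ W, ∑ u ∈ Wᶜ, f u v := by
  have h1 : ∀ v, (∑ u, f v u) = ∑ u ∈ W, f v u + ∑ u ∈ Wᶜ, f v u :=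
    fun v => (Finset.sum_add_sum_compl W _).symm
  have h2 : ∀ v, (∑ u, f u v) = ∑ u ∈ W, f u v + ∑ u ∈ Wᶜ, f u v :=
    fun v => (Finset.sum_add_sum_compl W _).symm
  have hswap : ∑ v ∈ W, ∑ u ∈ W, f v u = ∑ v ∈ W, ∑ u ∈ W, f u v := Finset.sum_comm
  simp only [exc, h1, h2, Finset.sum_sub_distrib, Finset.sum_add_distrib]
  linarith

lemma cycle_cross (C : EdgeCycle V) (W : Finset V) (i j : Fin C.n)
    (hi : (C.edge i).2 ∈ W) (hj : (C.edge j).2 ∉ W) :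
    ∃ k, (C.edge k).1 ∈ W ∧ (C.edge k).2 ∉ W := by
  by_contra hcon
  push_neg at hcon
  have hstep : ∀ m : ℕ, (C.edge ⟨(i.val + m) % C.n, Nat.mod_lt _ C.npos⟩).2 ∈ W := by
    intro m
    induction m with
    | zero =>
      have : (⟨(i.val + 0) % C.n, Nat.mod_lt _ C.npos⟩ : Fin C.n) = i := by
        apply Fin.ext; simp [Nat.mod_eq_of_lt i.isLt]
      rw [this]; exact hi
    | succ m ih =>
      have hch := C.chain ⟨(i.val + m) % C.n, Nat.mod_lt _ C.npos⟩
      rw [hch] at ih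
      have hsrc := hcon ⟨((i.val + m) % C.n + 1) % C.n, Nat.mod_lt _ C.npos⟩ ih
      have e1 : ((i.val + m) % C.n + 1) % C.n = (i.val + (m+1)) % C.n := by
        rw [Nat.mod_add_mod, Nat.add_assoc]
      have e2 : (⟨((i.val + m) % C.n + 1) % C.n, Nat.mod_lt _ C.npos⟩ : Fin C.n)
          = ⟨(i.val + (m+1)) % C.n, Nat.mod_lt _ C.npos⟩ := Fin.ext e1
      rw [e2] at hsrc; exact hsrc
  have key := hstep (C.n + j.val - i.val)
  have e3 : (i.val + (C.n + j.val - i.val)) % C.n = j.val := by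
    have h4 : i.val + (C.n + j.val - i.val) = C.n + j.val := by
      have := i.isLt; omega
    rw [h4, Nat.add_mod_left, Nat.mod_eq_of_lt j.isLt]
  have e4 : (⟨(i.val + (C.n + j.val - i.val)) % C.n, Nat.mod_lt _ C.npos⟩ : Fin C.n) = j :=
    Fin.ext e3
  rw [e4] at key; exact hj key

lemma mflux_le_cutval (c : V → V → ℝ) (bdry I : Finset V)
    (F : List (CycleFlow V)) (hF : Feasible c F) (W : Finset V) (hW : W ∩ bdry = I)
    (hI : I ⊆ bdry) :
    mflux F I (bdry \ I) ≤ cutval c W := by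
  have hIW : I ⊆ W := by
    intro v hv; rw [← hW] at hv; exact (Finset.mem_inter.mp hv).1
  have hJW : ∀ v ∈ bdry \ I, v ∉ W := by
    intro v hv hvW
    have h2 : v ∈ W ∩ bdry := Finset.mem_inter.mpr ⟨hvW, (Finset.mem_sdiff.mp hv).1⟩
    rw [hW] at h2
    exact (Finset.mem_sdiff.mp hv).2 h2
  have key : ∀ F : List (CycleFlow V),
      mflux F I (bdry \ I) ≤ ∑ u ∈ W, ∑ v ∈ Wᶜ, edgeLoad F u v := by
    intro F
    induction F with
    | nil => simp [mflux, edgeLoad]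
    | cons C F ih =>
      have hload : ∀ u v, edgeLoad (C :: F) u v
          = (if C.cyc.Mem (u, v) then C.flux else 0) + edgeLoad F u v := by
        intro u v; simp [edgeLoad]
      have hm : mflux (C :: F) I (bdry \ I)
          = (if C.cyc.Visits I ∧ C.cyc.Visits (bdry \ I) then C.flux else 0)
            + mflux F I (bdry \ I) := by simp [mflux]
      rw [hm]
      simp only [hload, Finset.sum_add_distrib]
      refine add_le_add ?_ ih
      by_cases hvis : C.cyc.Visits I ∧ C.cyc.Visits (bdry \ I)
      · rw [if_pos hvis]
        obtain ⟨⟨i, hi⟩, ⟨j, hj⟩⟩ := hvis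
        obtain ⟨k, hk1, hk2⟩ := cycle_cross C.cyc W i j (hIW hi) (hJW _ hj)
        have hmem : C.cyc.Mem ((C.cyc.edge k).1, (C.cyc.edge k).2) := ⟨k, Prod.mk.eta⟩
        have h1 : C.flux ≤ ∑ v ∈ Wᶜ, (if C.cyc.Mem ((C.cyc.edge k).1, v) then C.flux else 0) := by
          have h0 := Finset.single_le_sum
            (f := fun v => if C.cyc.Mem ((C.cyc.edge k).1, v) then C.flux else 0)
            (fun v _ => by by_cases h : C.cyc.Mem ((C.cyc.edge k).1, v) <;> simp [h, C.flux_nonneg])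
            (Finset.mem_compl.mpr hk2)
          simpa [if_pos hmem] using h0
        refine le_trans h1 ?_
        exact Finset.single_le_sum
          (f := fun u => ∑ v ∈ Wᶜ, (if C.cyc.Mem (u, v) then C.flux else 0))
          (fun u _ => Finset.sum_nonneg fun v _ => by
            by_cases h : C.cyc.Mem (u, v) <;> simp [h, C.flux_nonneg]) hk1
      · rw [if_neg hvis]
        exact Finset.sum_nonneg fun u _ => Finset.sum_nonneg fun v _ => by
          by_cases h : C.cyc.Mem (u, v) <;> simp [h, C.flux_nonneg]
  refine le_trans (key F) ?_
  exact Finset.sum_le_sum fun u _ => Finset.sum_le_sum fun v _ => hF u v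


structure NPath (r : V → V → Prop) (s t : V) where
  m : ℕ
  v : ℕ → V
  hs : v 0 = s
  ht : v m = t
  inj : ∀ i ≤ m, ∀ j ≤ m, v i = v j → i = j
  step : ∀ i, i < m → r (v i) (v (i+1))

def NReach (r : V → V → Prop) (s t : V) : Prop := Nonempty (NPath r s t)

lemma NReach.refl (r : V → V → Prop) (s : V) : NReach r s s :=
  ⟨⟨0, fun _ => s, rfl, rfl, fun i hi j hj _ => by omega, fun i hi => absurd hi (by omega)⟩⟩


/-- existence of a maximum flow -/
lemma NReach.snoc {r : V → V → Prop} {s u w : V} (h : NReach r s u) (hr : r u w) :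
    NReach r s w := by
  obtain ⟨p⟩ := h
  by_cases hw : ∃ j ≤ p.m, p.v j = w
  · obtain ⟨j, hj, hvj⟩ := hw
    exact ⟨⟨j, p.v, p.hs, hvj, fun a ha b hb => p.inj a (le_trans ha hj) b (le_trans hb hj),
      fun a ha => p.step a (lt_of_lt_of_le ha hj)⟩⟩
  · push_neg at hw
    refine ⟨⟨p.m + 1, fun i => if i = p.m + 1 then w else p.v i, ?_, ?_, ?_, ?_⟩⟩
    · simp [p.hs]
    · simp
    · intro a ha b hb hab
      by_cases h1 : a = p.m + 1 <;> by_cases h2 : b = p.m + 1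
      · omega
      · exfalso; have hb' : b ≤ p.m := by omega
        simp only [h1, if_pos rfl, if_neg h2] at hab
        exact hw b hb' hab.symm
      · exfalso; have ha' : a ≤ p.m := by omega
        simp only [h2, if_pos rfl, if_neg h1] at hab
        exact hw a ha' hab
      · simp only [if_neg h1, if_neg h2] at hab
        exact p.inj a (by omega) b (by omega) hab
    · intro a ha
      by_cases h1 : a < p.m
      · have e1 : a ≠ p.m + 1 := by omega
        have e2 : a + 1 ≠ p.m + 1 := by omega
        simp only [if_neg e1, if_neg e2]
        exact p.step a h1
      · have haeq : a = p.m := by omega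
        subst haeq
        show r (if p.m = p.m + 1 then w else p.v p.m) (if p.m + 1 = p.m + 1 then w else p.v (p.m+1))
        rw [if_neg (by omega : ¬ p.m = p.m + 1), if_pos rfl, p.ht]
        exact hr



noncomputable def Eind (a b : V) : V → V → ℝ := fun u w => if u = a ∧ w = b then 1 else 0

lemma Eind_nonneg (a b u w : V) : 0 ≤ Eind a b u w := by
  unfold Eind; split <;> norm_num

lemma Eind_le_one (a b u w : V) : Eind a b u w ≤ 1 := by
  unfold Eind; split <;> norm_num

lemma exc_Eind (a b v : V) :
    exc (Eind a b) v = (if v = a then (1:ℝ) else 0) - (if v = b then (1:ℝ) else 0) := by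
  unfold exc Eind
  congr 1
  · by_cases hva : v = a
    · simp [hva]
    · simp [hva]
  · by_cases hvb : v = b
    · simp [hvb]
    · simp [hvb]

lemma exc_neg (h : V → V → ℝ) (v : V) : exc (fun u w => -(h u w)) v = -(exc h v) := by
  simp [exc]; ring

lemma exc_add_smul (f h : V → V → ℝ) (ε : ℝ) (v : V) :
    exc (fun u w => f u w + ε * h u w) v = exc f v + ε * exc h v := by
  simp [exc, Finset.sum_add_distrib, Finset.mul_sum, mul_sub]; ring

lemma exc_sub_smul (f h : V → V → ℝ) (ε : ℝ) (v : V) :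
    exc (fun u w => f u w - ε * h u w) v = exc f v - ε * exc h v := by
  simp [exc, Finset.sum_sub_distrib, Finset.mul_sum, mul_sub]; ring

lemma exc_finsum {ι : Type*} (s : Finset ι) (h : ι → V → V → ℝ) (v : V) :
    exc (fun u w => ∑ i ∈ s, h i u w) v = ∑ i ∈ s, exc (h i) v := by
  simp only [exc, Finset.sum_sub_distrib]
  rw [Finset.sum_comm (f := fun u i => h i v u), Finset.sum_comm (f := fun u i => h i u v)]

/-- step indicator sum of a path -/
noncomputable def NPath.dind {r : V → V → Prop} {s t : V} (p : NPath r s t) : V → V → ℝ :=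
  fun u w => ∑ i ∈ Finset.range p.m, Eind (p.v i) (p.v (i+1)) u w

def NPath.IsStep {r : V → V → Prop} {s t : V} (p : NPath r s t) (u w : V) : Prop :=
  ∃ i, i < p.m ∧ p.v i = u ∧ p.v (i+1) = w

lemma NPath.dind_eq {r : V → V → Prop} {s t : V} (p : NPath r s t) (u w : V) :
    p.dind u w = if p.IsStep u w then 1 else 0 := by
  unfold NPath.dind
  by_cases h : p.IsStep u w
  · rw [if_pos h]
    obtain ⟨i, him, hiu, hiw⟩ := h
    rw [Finset.sum_eq_single i]
    · simp [Eind, hiu.symm, hiw.symm]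
    · intro j hj hji
      have hjm : j < p.m := Finset.mem_range.mp hj
      unfold Eind
      rw [if_neg]
      rintro ⟨h1, h2⟩
      apply hji
      exact p.inj j (by omega) i (by omega) (by rw [hiu, ← h1])
    · intro hi; exact absurd (Finset.mem_range.mpr him) hi
  · rw [if_neg h]
    apply Finset.sum_eq_zero
    intro i hi
    unfold Eind
    rw [if_neg]
    rintro ⟨h1, h2⟩
    exact h ⟨i, Finset.mem_range.mp hi, h1.symm, h2.symm⟩

lemma NPath.dind_nonneg {r : V → V → Prop} {s t : V} (p : NPath r s t) (u w : V) :
    0 ≤ p.dind u w := by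
  rw [p.dind_eq]; split <;> norm_num

lemma NPath.exc_dind {r : V → V → Prop} {s t : V} (p : NPath r s t) (v : V) :
    exc p.dind v = (if v = s then (1:ℝ) else 0) - (if v = t then (1:ℝ) else 0) := by
  unfold NPath.dind
  rw [exc_finsum]
  have : ∀ i ∈ Finset.range p.m, exc (Eind (p.v i) (p.v (i+1))) v
      = (fun k => if v = p.v k then (1:ℝ) else 0) i - (fun k => if v = p.v k then (1:ℝ) else 0) (i+1) :=
    fun i _ => exc_Eind _ _ _
  rw [Finset.sum_congr rfl this, Finset.sum_range_sub']
  simp [p.hs, p.ht]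

/-- the cycle associated to a path: the path followed by its reversal -/
noncomputable def NPath.cycle {r : V → V → Prop} {s t : V} (p : NPath r s t)
    (hm : 0 < p.m) : EdgeCycle V where
  n := 2 * p.m
  npos := by omega
  edge := fun i => if i.val < p.m then (p.v i.val, p.v (i.val + 1))
    else (p.v (2 * p.m - i.val), p.v (2 * p.m - i.val - 1))
  inj := by
    intro a b hab
    have ha2 := a.isLt
    have hb2 := b.isLt
    dsimp only at hab
    apply Fin.ext
    by_cases h1 : a.val < p.m <;> by_cases h2 : b.val < p.m
    · rw [if_pos h1, if_pos h2, Prod.mk.injEq] at hab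
      exact p.inj a.val (by omega) b.val (by omega) hab.1
    · rw [if_pos h1, if_neg h2, Prod.mk.injEq] at hab
      have e1 := p.inj a.val (by omega) (2 * p.m - b.val) (by omega) hab.1
      have e2 := p.inj (a.val + 1) (by omega) (2 * p.m - b.val - 1) (by omega) hab.2
      omega
    · rw [if_neg h1, if_pos h2, Prod.mk.injEq] at hab
      have e1 := p.inj (2 * p.m - a.val) (by omega) b.val (by omega) hab.1
      have e2 := p.inj (2 * p.m - a.val - 1) (by omega) (b.val + 1) (by omega) hab.2
      omega
    · rw [if_neg h1, if_neg h2, Prod.mk.injEq] at hab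
      have e1 := p.inj (2 * p.m - a.val) (by omega) (2 * p.m - b.val) (by omega) hab.1
      omega
  chain := by
    intro i
    have hi2 := i.isLt
    dsimp only
    by_cases h1 : i.val < p.m - 1
    · have e : (i.val + 1) % (2 * p.m) = i.val + 1 := Nat.mod_eq_of_lt (by omega)
      simp only [e]; rw [if_pos (by omega : i.val < p.m), if_pos (by omega : i.val + 1 < p.m)]
    · by_cases h2 : i.val = p.m - 1
      · have e : (i.val + 1) % (2 * p.m) = i.val + 1 := Nat.mod_eq_of_lt (by omega)
        simp only [e]; rw [if_pos (by omega : i.val < p.m), if_neg (by omega : ¬ i.val + 1 < p.m)]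
        dsimp only
        first
        | rfl
        | (congr 1; omega)
      · by_cases h3 : i.val < 2 * p.m - 1
        · have e : (i.val + 1) % (2 * p.m) = i.val + 1 := Nat.mod_eq_of_lt (by omega)
          simp only [e]; rw [if_neg (by omega : ¬ i.val < p.m), if_neg (by omega : ¬ i.val + 1 < p.m)]
          dsimp only
          first
          | rfl
          | (congr 1; omega)
        · have e : (i.val + 1) % (2 * p.m) = 0 := by
            rw [show i.val + 1 = 2 * p.m by omega]; exact Nat.mod_self _
          simp only [e]; rw [if_neg (by omega : ¬ i.val < p.m), if_pos hm]
          dsimp only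
          first
          | rfl
          | (congr 1; omega)

lemma NPath.cycle_mem {r : V → V → Prop} {s t : V} (p : NPath r s t) (hm : 0 < p.m)
    {u w : V} (h : (p.cycle hm).Mem (u, w)) : p.IsStep u w ∨ p.IsStep w u := by
  obtain ⟨i, hi⟩ := h
  have hi2 : i.val < 2 * p.m := i.isLt
  dsimp only [NPath.cycle] at hi
  by_cases h1 : i.val < p.m
  · rw [if_pos h1, Prod.mk.injEq] at hi
    exact Or.inl ⟨i.val, h1, hi.1, hi.2⟩
  · rw [if_neg h1, Prod.mk.injEq] at hi
    refine Or.inr ⟨2 * p.m - i.val - 1, by omega, hi.2, ?_⟩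
    rw [show 2 * p.m - i.val - 1 + 1 = 2 * p.m - i.val by omega]
    exact hi.1

lemma NPath.cycle_visits_last {r : V → V → Prop} {s t : V} (p : NPath r s t) (hm : 0 < p.m)
    {S : Finset V} (ht : t ∈ S) : (p.cycle hm).Visits S := by
  refine ⟨⟨p.m - 1, show p.m - 1 < 2 * p.m by omega⟩, ?_⟩
  dsimp only [NPath.cycle]
  rw [if_pos (by omega : p.m - 1 < p.m)]
  dsimp only
  rw [show p.m - 1 + 1 = p.m by omega, p.ht]
  exact ht

lemma NPath.cycle_visits_first {r : V → V → Prop} {s t : V} (p : NPath r s t) (hm : 0 < p.m)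
    {S : Finset V} (hs : s ∈ S) : (p.cycle hm).Visits S := by
  refine ⟨⟨2 * p.m - 1, show 2 * p.m - 1 < 2 * p.m by omega⟩, ?_⟩
  dsimp only [NPath.cycle]
  rw [if_neg (by omega : ¬ 2 * p.m - 1 < p.m)]
  dsimp only
  rw [show 2 * p.m - (2 * p.m - 1) - 1 = 0 by omega, p.hs]
  exact hs
  
lemma exists_max_flow (c : V → V → ℝ) (hc : ∀ u v, 0 ≤ c u v) (I J : Finset V) :
    ∃ f, IsFlow c I J f ∧ ∀ g, IsFlow c I J g → fval I g ≤ fval I f := by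
  set S : Set (V → V → ℝ) := {f | IsFlow c I J f} with hS
  have hcont_eval : ∀ (a b : V), Continuous (fun f : V → V → ℝ => f a b) :=
    fun a b => (continuous_apply b).comp (continuous_apply a)
  have hcont_exc : ∀ v, Continuous (fun f : V → V → ℝ => exc f v) := by
    intro v
    exact (continuous_finset_sum _ fun u _ => hcont_eval v u).sub
      (continuous_finset_sum _ fun u _ => hcont_eval u v)
  have hcont_val : Continuous (fun f : V → V → ℝ => fval I f) :=
    continuous_finset_sum _ fun v _ => hcont_exc v
  have hSeq : S = {f : V → V → ℝ | ∀ u v, 0 ≤ f u v} ∩ {f | ∀ u v, f u v ≤ c u v}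
      ∩ {f | ∀ v, v ∉ I → v ∉ J → exc f v = 0} ∩ {f | ∀ v ∈ I, 0 ≤ exc f v} := by
    ext f
    simp only [Set.mem_inter_iff, Set.mem_setOf_eq, hS]
    constructor
    · rintro ⟨a, b, d, e⟩; exact ⟨⟨⟨a, b⟩, d⟩, e⟩
    · rintro ⟨⟨⟨a, b⟩, d⟩, e⟩; exact ⟨a, b, d, e⟩
  have hclosed : IsClosed S := by
    rw [hSeq]
    refine IsClosed.inter (IsClosed.inter (IsClosed.inter ?_ ?_) ?_) ?_
    · simp only [Set.setOf_forall]
      exact isClosed_iInter fun u => isClosed_iInter fun v =>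
        isClosed_le continuous_const (hcont_eval u v)
    · simp only [Set.setOf_forall]
      exact isClosed_iInter fun u => isClosed_iInter fun v =>
        isClosed_le (hcont_eval u v) continuous_const
    · simp only [Set.setOf_forall]
      refine isClosed_iInter fun v => ?_
      by_cases h1 : v ∈ I
      · simp [h1]
      by_cases h2 : v ∈ J
      · simp [h2]
      simp only [h1, h2, not_false_iff, forall_true_left, Set.iInter_true]
      exact isClosed_eq (hcont_exc v) continuous_const
    · simp only [Set.setOf_forall]
      refine isClosed_iInter fun v => ?_
      by_cases h1 : v ∈ I
      · simp only [h1, forall_true_left, Set.iInter_true]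
        exact isClosed_le continuous_const (hcont_exc v)
      · simp [h1]
  have hKcomp : IsCompact (Set.pi Set.univ fun u : V =>
      Set.pi Set.univ fun v : V => Set.Icc (0 : ℝ) (c u v)) :=
    isCompact_univ_pi fun u => isCompact_univ_pi fun v => isCompact_Icc
  have hsub : S ⊆ Set.pi Set.univ fun u : V =>
      Set.pi Set.univ fun v : V => Set.Icc (0 : ℝ) (c u v) := by
    intro f hf u _ 
    intro v _
    exact ⟨hf.nonneg u v, hf.le_cap u v⟩
  have hScomp : IsCompact S := hKcomp.of_isClosed_subset hclosed hsub
  have hne : S.Nonempty := by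
    refine ⟨fun _ _ => 0, ?_⟩
    constructor
    · intro u v; exact le_refl 0
    · intro u v; exact hc u v
    · intro v _ _; simp [exc]
    · intro v _; simp [exc]
  obtain ⟨f, hfS, hfmax⟩ := hScomp.exists_isMaxOn hne hcont_val.continuousOn
  exact ⟨f, hfS, fun g hg => hfmax hg⟩


lemma Eind_pos {a b u w : V} (h : 0 < Eind a b u w) : u = a ∧ w = b := by
  by_contra hcon
  have : Eind a b u w = 0 := by unfold Eind; rw [if_neg hcon]
  rw [this] at h; exact lt_irrefl _ h

lemma no_augment (c : V → V → ℝ) (I J : Finset V) (hd : Disjoint I J)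
    (f : V → V → ℝ) (hf : IsFlow c I J f)
    (hmax : ∀ g, IsFlow c I J g → fval I g ≤ fval I f)
    {s t : V} (hs : s ∈ I) (ht : t ∈ J)
    (p : NPath (fun u v => f u v < c u v ∨ 0 < f v u) s t) : False := by
  have hst : s ≠ t := fun h => (Finset.disjoint_left.mp hd hs) (h ▸ ht)
  have htI : t ∉ I := fun h => (Finset.disjoint_left.mp hd h) ht
  have hm : 0 < p.m := by
    rcases Nat.eq_zero_or_pos p.m with h | h
    · exfalso
      apply hst
      have h2 := p.ht
      rw [h] at h2
      rw [← p.hs]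
      exact h2
    · exact h
  set m := p.m with hmdef
  set slack : ℕ → ℝ := fun i => if f (p.v i) (p.v (i+1)) < c (p.v i) (p.v (i+1))
      then c (p.v i) (p.v (i+1)) - f (p.v i) (p.v (i+1)) else f (p.v (i+1)) (p.v i)
      with hslackdef
  have hslack : ∀ i < m, 0 < slack i := by
    intro i him
    have hstep := p.step i him
    by_cases hc1 : f (p.v i) (p.v (i+1)) < c (p.v i) (p.v (i+1))
    · simp only [hslackdef, if_pos hc1]; linarith
    · simp only [hslackdef, if_neg hc1]
      rcases hstep with h | h
      · exact absurd h hc1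
      · exact h
  have hne : (Finset.range m).Nonempty := ⟨0, Finset.mem_range.mpr hm⟩
  set δ : ℝ := (Finset.range m).inf' hne slack with hδdef
  have hδpos : 0 < δ := by
    rw [hδdef, Finset.lt_inf'_iff]
    intro i hi; exact hslack i (Finset.mem_range.mp hi)
  have hδle : ∀ i ∈ Finset.range m, δ ≤ slack i := fun i hi => Finset.inf'_le _ hi
  set D : ℕ → V → V → ℝ := fun i u w =>
    if f (p.v i) (p.v (i+1)) < c (p.v i) (p.v (i+1)) then Eind (p.v i) (p.v (i+1)) u w
    else -(Eind (p.v (i+1)) (p.v i) u w) with hDdef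
  set d : V → V → ℝ := fun u w => ∑ i ∈ Finset.range m, D i u w with hddef
  set ε : ℝ := δ / (m + 1) with hεdef
  have hεpos : 0 < ε := div_pos hδpos (by positivity)
  have hεm : ε * m < δ := by
    rw [hεdef, div_mul_eq_mul_div, div_lt_iff₀ (by positivity)]
    nlinarith [hδpos]
  have hDle : ∀ i u w, D i u w ≤ 1 := by
    intro i u w
    simp only [hDdef]
    split
    · exact Eind_le_one _ _ _ _
    · have := Eind_nonneg (p.v (i+1)) (p.v i) u w; linarith
  have hDge : ∀ i u w, -1 ≤ D i u w := by
    intro i u w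
    simp only [hDdef]
    split
    · have := Eind_nonneg (p.v i) (p.v (i+1)) u w; linarith
    · have := Eind_le_one (p.v (i+1)) (p.v i) u w; linarith
  have hdle : ∀ u w, d u w ≤ m := by
    intro u w
    calc d u w ≤ ∑ _i ∈ Finset.range m, (1:ℝ) :=
          Finset.sum_le_sum fun i _ => hDle i u w
      _ = m := by simp
  have hdge : ∀ u w, -(m:ℝ) ≤ d u w := by
    intro u w
    calc -(m:ℝ) = ∑ _i ∈ Finset.range m, (-1:ℝ) := by simp
      _ ≤ d u w := Finset.sum_le_sum fun i _ => hDge i u w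
  have hpos : ∀ u w, 0 < d u w → δ ≤ c u w - f u w := by
    intro u w hd0
    obtain ⟨i, hi, hDi⟩ : ∃ i ∈ Finset.range m, 0 < D i u w := by
      by_contra hno; push_neg at hno
      have : d u w ≤ 0 := Finset.sum_nonpos fun i hi => hno i hi
      linarith
    simp only [hDdef] at hDi
    by_cases hfc : f (p.v i) (p.v (i+1)) < c (p.v i) (p.v (i+1))
    · rw [if_pos hfc] at hDi
      obtain ⟨hu, hw⟩ := Eind_pos hDi
      subst hu; subst hw
      have := hδle i hi
      rw [hslackdef] at this
      simp only [if_pos hfc] at this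
      linarith
    · rw [if_neg hfc] at hDi
      have := Eind_nonneg (p.v (i+1)) (p.v i) u w
      linarith
  have hneg : ∀ u w, d u w < 0 → δ ≤ f u w := by
    intro u w hd0
    obtain ⟨i, hi, hDi⟩ : ∃ i ∈ Finset.range m, D i u w < 0 := by
      by_contra hno; push_neg at hno
      have : 0 ≤ d u w := Finset.sum_nonneg fun i hi => hno i hi
      linarith
    simp only [hDdef] at hDi
    by_cases hfc : f (p.v i) (p.v (i+1)) < c (p.v i) (p.v (i+1))
    · rw [if_pos hfc] at hDi
      have := Eind_nonneg (p.v i) (p.v (i+1)) u w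
      linarith
    · rw [if_neg hfc] at hDi
      have hpos' : 0 < Eind (p.v (i+1)) (p.v i) u w := by linarith
      obtain ⟨hu, hw⟩ := Eind_pos hpos'
      subst hu; subst hw
      have := hδle i hi
      rw [hslackdef] at this
      simp only [if_neg hfc] at this
      linarith
  have hexcd : ∀ v, exc d v = (if v = s then (1:ℝ) else 0) - (if v = t then (1:ℝ) else 0) := by
    intro v
    have h0 : exc d v = ∑ i ∈ Finset.range m, exc (D i) v := by
      rw [hddef]; exact exc_finsum _ _ _
    have h1 : ∀ i ∈ Finset.range m, exc (D i) v
        = (fun k => if v = p.v k then (1:ℝ) else 0) i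
          - (fun k => if v = p.v k then (1:ℝ) else 0) (i+1) := by
      intro i _
      by_cases hfc : f (p.v i) (p.v (i+1)) < c (p.v i) (p.v (i+1))
      · have : D i = Eind (p.v i) (p.v (i+1)) := by
          funext u w; simp only [hDdef, if_pos hfc]
        rw [this, exc_Eind]
      · have : D i = fun u w => -(Eind (p.v (i+1)) (p.v i) u w) := by
          funext u w; simp only [hDdef, if_neg hfc]
        rw [this, exc_neg, exc_Eind]
        dsimp only
        ring
    rw [h0, Finset.sum_congr rfl h1, Finset.sum_range_sub']
    rw [p.hs, p.ht]
  set g : V → V → ℝ := fun u w => f u w + ε * d u w with hgdef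
  have hexcg : ∀ v, exc g v = exc f v + ε * exc d v := fun v => exc_add_smul f d ε v
  have hgflow : IsFlow c I J g := by
    constructor
    · intro u w
      rcases le_or_gt 0 (d u w) with h | h
      · have h1 : 0 ≤ ε * d u w := mul_nonneg hεpos.le h
        have := hf.nonneg u w
        show 0 ≤ f u w + ε * d u w
        linarith
      · have h1 := hneg u w h
        have h2 : ε * (-(m:ℝ)) ≤ ε * d u w :=
          mul_le_mul_of_nonneg_left (hdge u w) hεpos.le
        show 0 ≤ f u w + ε * d u w
        have : ε * (-(m:ℝ)) = -(ε * m) := by ring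
        linarith
    · intro u w
      rcases le_or_gt (d u w) 0 with h | h
      · have h1 : ε * d u w ≤ 0 := mul_nonpos_of_nonneg_of_nonpos hεpos.le h
        have := hf.le_cap u w
        show f u w + ε * d u w ≤ c u w
        linarith
      · have h1 := hpos u w h
        have h2 : ε * d u w ≤ ε * m := mul_le_mul_of_nonneg_left (hdle u w) hεpos.le
        show f u w + ε * d u w ≤ c u w
        linarith
    · intro v hvI hvJ
      have h1 : v ≠ s := fun h => hvI (h ▸ hs)
      have h2 : v ≠ t := fun h => hvJ (h ▸ ht)
      rw [hexcg, hexcd, hf.cons v hvI hvJ]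
      simp [h1, h2]
    · intro v hv
      have h2 : v ≠ t := fun h => (Finset.disjoint_left.mp hd hv) (h ▸ ht)
      rw [hexcg, hexcd]
      have h3 := hf.src v hv
      by_cases h1 : v = s
      · rw [if_pos h1, if_neg h2]
        linarith [hεpos]
      · rw [if_neg h1, if_neg h2]
        linarith
  have hval : fval I g = fval I f + ε := by
    unfold fval
    rw [Finset.sum_congr rfl (fun v _ => by rw [hexcg v, hexcd v])]
    rw [Finset.sum_add_distrib]
    congr 1
    rw [← Finset.mul_sum, Finset.sum_sub_distrib]
    rw [Finset.sum_ite_eq' I s (fun _ => (1:ℝ)), Finset.sum_ite_eq' I t (fun _ => (1:ℝ))]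
    rw [if_pos hs, if_neg htI]
    ring
  have := hmax g hgflow
  rw [hval] at this
  linarith


lemma max_flow_cut (c : V → V → ℝ) (hc : ∀ u v, 0 ≤ c u v) (bdry I : Finset V)
    (hI : I ⊆ bdry) (f : V → V → ℝ) (hf : IsFlow c I (bdry \ I) f)
    (hmax : ∀ g, IsFlow c I (bdry \ I) g → fval I g ≤ fval I f) :
    ∃ W : Finset V, W ∩ bdry = I ∧ cutval c W = fval I f := by
  set J := bdry \ I with hJdef
  have hd : Disjoint I J := Finset.disjoint_left.mpr fun a ha hb => (Finset.mem_sdiff.mp hb).2 ha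
  set r : V → V → Prop := fun u v => f u v < c u v ∨ 0 < f v u with hr
  set W : Finset V := Finset.univ.filter (fun v => ∃ s ∈ I, NReach r s v) with hW
  have hmemW : ∀ v, v ∈ W ↔ ∃ s ∈ I, NReach r s v := by
    intro v; simp [hW]
  have hIW : I ⊆ W := fun v hv => (hmemW v).mpr ⟨v, hv, NReach.refl r v⟩
  have hJW : ∀ t ∈ J, t ∉ W := by
    intro t ht htW
    obtain ⟨s, hs, ⟨p⟩⟩ := (hmemW t).mp htW
    exact no_augment c I J hd f hf hmax hs ht p
  have hnr : ∀ u ∈ W, ∀ w, w ∉ W → f u w = c u w ∧ f w u = 0 := by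
    intro u hu w hw
    have hnru : ¬ r u w := by
      intro hruw
      apply hw
      obtain ⟨s0, hs0, hre⟩ := (hmemW u).mp hu
      exact (hmemW w).mpr ⟨s0, hs0, hre.snoc hruw⟩
    simp only [hr] at hnru; push_neg at hnru
    exact ⟨le_antisymm (hf.le_cap u w) hnru.1, le_antisymm hnru.2 (hf.nonneg w u)⟩
  have hWb : W ∩ bdry = I := by
    ext v
    simp only [Finset.mem_inter]
    constructor
    · rintro ⟨hvW, hvb⟩
      by_contra hvI
      exact hJW v (Finset.mem_sdiff.mpr ⟨hvb, hvI⟩) hvW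
    · intro hv; exact ⟨hIW hv, hI hv⟩
  refine ⟨W, hWb, ?_⟩
  have h1 : fval I f = ∑ v ∈ W, exc f v := by
    apply Finset.sum_subset hIW
    intro v hvW hvI
    exact hf.cons v hvI (fun hvJ => hJW v hvJ hvW)
  rw [h1, exc_sum_cut]
  have h2 : ∑ v ∈ W, ∑ u ∈ Wᶜ, f v u = cutval c W := by
    unfold cutval
    apply Finset.sum_congr rfl; intro v hv
    apply Finset.sum_congr rfl; intro u hu
    exact (hnr v hv u (Finset.mem_compl.mp hu)).1
  have h3 : ∑ v ∈ W, ∑ u ∈ Wᶜ, f u v = 0 := by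
    apply Finset.sum_eq_zero; intro v hv
    apply Finset.sum_eq_zero; intro u hu
    exact (hnr v hv u (Finset.mem_compl.mp hu)).2
  rw [h2, h3]; ring


lemma cancel_flow (c : V → V → ℝ) (hsym : ∀ u v, c u v = c v u) (I J : Finset V)
    (f : V → V → ℝ) (hf : IsFlow c I J f) :
    ∃ g, IsFlow c I J g ∧ fval I g = fval I f ∧ ∀ u v, g u v + g v u ≤ c u v := by
  set g : V → V → ℝ := fun u v => f u v - min (f u v) (f v u) with hg
  have hexc : ∀ v, exc g v = exc f v := by
    intro v
    have h1 : ∑ u, g v u = (∑ u, f v u) - ∑ u, min (f v u) (f u v) := by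
      simp [hg, Finset.sum_sub_distrib]
    have h2 : ∑ u, g u v = (∑ u, f u v) - ∑ u, min (f u v) (f v u) := by
      simp [hg, Finset.sum_sub_distrib]
    have h3 : ∑ u, min (f v u) (f u v) = ∑ u, min (f u v) (f v u) :=
      Finset.sum_congr rfl fun u _ => min_comm _ _
    simp only [exc, h1, h2, h3]; ring
  refine ⟨g, ⟨?_, ?_, ?_, ?_⟩, ?_, ?_⟩
  · intro u v; exact sub_nonneg.mpr (min_le_left _ _)
  · intro u v
    have hmin : (0:ℝ) ≤ min (f u v) (f v u) := le_min (hf.nonneg u v) (hf.nonneg v u)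
    have he : g u v = f u v - min (f u v) (f v u) := rfl
    have := hf.le_cap u v
    rw [he]; linarith
  · intro v h1 h2; rw [hexc]; exact hf.cons v h1 h2
  · intro v hv; rw [hexc]; exact hf.src v hv
  · exact Finset.sum_congr rfl fun v _ => hexc v
  · intro u v
    rcases le_total (f u v) (f v u) with h | h
    · have e1 : g u v = 0 := by
        show f u v - min (f u v) (f v u) = 0
        rw [min_eq_left h]; ring
      have e2 : g v u = f v u - f u v := by
        show f v u - min (f v u) (f u v) = f v u - f u v
        rw [min_eq_right h]
      have := hf.le_cap v u
      have := hf.nonneg u v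
      have := hsym u v
      linarith
    · have e1 : g v u = 0 := by
        show f v u - min (f v u) (f u v) = 0
        rw [min_eq_left h]; ring
      have e2 : g u v = f u v - f v u := by
        show f u v - min (f u v) (f v u) = f u v - f v u
        rw [min_eq_right h]
      have := hf.le_cap u v
      have := hf.nonneg v u
      linarith


noncomputable def fmeasure (I : Finset V) (g : V → V → ℝ) : ℕ :=
  (Finset.univ.filter (fun q : V × V => 0 < g q.1 q.2)).card
  + (I.filter (fun v => 0 < exc g v)).card

lemma decomp_step (c : V → V → ℝ) (I J : Finset V) (hd : Disjoint I J)
    (g : V → V → ℝ) (hg : IsFlow c I J g) (hpos : 0 < fval I g) :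
    ∃ (g' : V → V → ℝ) (C : CycleFlow V), IsFlow c I J g' ∧
      fmeasure I g' < fmeasure I g ∧
      C.cyc.Visits I ∧ C.cyc.Visits J ∧
      (∀ u w, (if C.cyc.Mem (u, w) then C.flux else 0) + (g' u w + g' w u) ≤ g u w + g w u) ∧
      fval I g = fval I g' + C.flux := by
  obtain ⟨s, hs, hse⟩ : ∃ s ∈ I, 0 < exc g s := by
    by_contra hno; push_neg at hno
    have : fval I g ≤ 0 := Finset.sum_nonpos fun v hv => hno v hv
    linarith
  set r : V → V → Prop := fun u w => 0 < g u w with hr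
  set W : Finset V := Finset.univ.filter (NReach r s) with hW
  have hmemW : ∀ v, v ∈ W ↔ NReach r s v := fun v => by simp [hW]
  have hsW : s ∈ W := (hmemW s).mpr (NReach.refl r s)
  have hJreach : ∃ t ∈ J, t ∈ W := by
    by_contra hno; push_neg at hno
    have hzero : ∀ v ∈ W, ∀ u, u ∉ W → g v u = 0 := by
      intro v hv u hu
      by_contra hgvu
      have hlt : 0 < g v u := lt_of_le_of_ne (hg.nonneg v u) (Ne.symm hgvu)
      exact hu ((hmemW u).mpr (NReach.snoc ((hmemW v).mp hv) hlt))
    have hle : ∑ v ∈ W, exc g v ≤ 0 := by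
      rw [exc_sum_cut]
      have e1 : ∑ v ∈ W, ∑ u ∈ Wᶜ, g v u = 0 :=
        Finset.sum_eq_zero fun v hv => Finset.sum_eq_zero fun u hu =>
          hzero v hv u (Finset.mem_compl.mp hu)
      have e2 : 0 ≤ ∑ v ∈ W, ∑ u ∈ Wᶜ, g u v :=
        Finset.sum_nonneg fun v _ => Finset.sum_nonneg fun u _ => hg.nonneg u v
      linarith
    have hgt : 0 < ∑ v ∈ W, exc g v := by
      apply Finset.sum_pos'
      · intro v hv
        by_cases hvI : v ∈ I
        · exact hg.src v hvI
        · by_cases hvJ : v ∈ J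
          · exact absurd hv (hno v hvJ)
          · rw [hg.cons v hvI hvJ]
      · exact ⟨s, hsW, hse⟩
    linarith
  obtain ⟨t, htJ, htW⟩ := hJreach
  obtain ⟨p⟩ := (hmemW t).mp htW
  have hst : s ≠ t := fun h => (Finset.disjoint_left.mp hd hs) (h ▸ htJ)
  have htI : t ∉ I := fun h => (Finset.disjoint_left.mp hd h) htJ
  have hm : 0 < p.m := by
    rcases Nat.eq_zero_or_pos p.m with h | h
    · exfalso
      apply hst
      have h2 := p.ht
      rw [h] at h2
      rw [← p.hs]
      exact h2
    · exact h
  have hne : (Finset.range p.m).Nonempty := ⟨0, Finset.mem_range.mpr hm⟩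
  set einf : ℝ := (Finset.range p.m).inf' hne (fun i => g (p.v i) (p.v (i+1))) with heinf
  have heinfpos : 0 < einf := by
    rw [heinf, Finset.lt_inf'_iff]
    intro i hi
    exact p.step i (Finset.mem_range.mp hi)
  set ε : ℝ := min (exc g s) einf with hε
  have hεpos : 0 < ε := lt_min hse heinfpos
  have hεle_exc : ε ≤ exc g s := min_le_left _ _
  have hεle : ∀ i < p.m, ε ≤ g (p.v i) (p.v (i+1)) := fun i hi =>
    le_trans (min_le_right _ _) (Finset.inf'_le _ (Finset.mem_range.mpr hi))
  set g' : V → V → ℝ := fun u w => g u w - ε * p.dind u w with hg'def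
  have hexc' : ∀ v, exc g' v
      = exc g v - ε * ((if v = s then (1:ℝ) else 0) - (if v = t then (1:ℝ) else 0)) := by
    intro v
    rw [hg'def]
    rw [exc_sub_smul g p.dind ε v, p.exc_dind]
  have hg'le : ∀ u w, g' u w ≤ g u w := by
    intro u w
    have h0 := mul_nonneg hεpos.le (p.dind_nonneg u w)
    show g u w - ε * p.dind u w ≤ g u w
    linarith
  have hg'nonneg : ∀ u w, 0 ≤ g' u w := by
    intro u w
    show 0 ≤ g u w - ε * p.dind u w
    rw [p.dind_eq]
    by_cases hstep : p.IsStep u w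
    · rw [if_pos hstep]
      obtain ⟨i, him, hiu, hiw⟩ := hstep
      have h1 := hεle i him
      rw [hiu, hiw] at h1
      linarith
    · rw [if_neg hstep]
      have := hg.nonneg u w
      linarith
  have hflow' : IsFlow c I J g' := by
    constructor
    · exact hg'nonneg
    · intro u w; exact le_trans (hg'le u w) (hg.le_cap u w)
    · intro v hvI hvJ
      rw [hexc' v, hg.cons v hvI hvJ]
      have h1 : v ≠ s := fun h => hvI (h ▸ hs)
      have h2 : v ≠ t := fun h => hvJ (h ▸ htJ)
      simp [h1, h2]
    · intro v hv
      rw [hexc' v]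
      have h2 : v ≠ t := fun h => (Finset.disjoint_left.mp hd hv) (h ▸ htJ)
      by_cases h1 : v = s
      · rw [if_pos h1, if_neg h2]
        have h3 : exc g v = exc g s := by rw [h1]
        rw [h3]
        linarith
      · rw [if_neg h1, if_neg h2]
        have := hg.src v hv
        linarith
  have hval' : fval I g' = fval I g - ε := by
    unfold fval
    rw [Finset.sum_congr rfl (fun v _ => hexc' v), Finset.sum_sub_distrib, ← Finset.mul_sum,
        Finset.sum_sub_distrib, Finset.sum_ite_eq' I s (fun _ => (1:ℝ)),
        Finset.sum_ite_eq' I t (fun _ => (1:ℝ)), if_pos hs, if_neg htI]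
    ring
  have hsub1 : Finset.univ.filter (fun q : V × V => 0 < g' q.1 q.2)
      ⊆ Finset.univ.filter (fun q : V × V => 0 < g q.1 q.2) := by
    intro q hq
    simp only [Finset.mem_filter, Finset.mem_univ, true_and] at hq ⊢
    exact lt_of_lt_of_le hq (hg'le q.1 q.2)
  have hsub2 : I.filter (fun v => 0 < exc g' v) ⊆ I.filter (fun v => 0 < exc g v) := by
    intro v hv
    simp only [Finset.mem_filter] at hv ⊢
    refine ⟨hv.1, ?_⟩
    have h2 : v ≠ t := fun h => (Finset.disjoint_left.mp hd hv.1) (h ▸ htJ)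
    have he := hexc' v
    rw [if_neg h2] at he
    by_cases h1 : v = s
    · rw [if_pos h1] at he
      have := hv.2
      rw [he] at this
      linarith
    · rw [if_neg h1] at he
      have := hv.2
      rw [he] at this
      linarith
  have hdec : fmeasure I g' < fmeasure I g := by
    unfold fmeasure
    rcases le_or_gt (exc g s) einf with hcase | hcase
    · have hεeq : ε = exc g s := min_eq_left hcase
      have hsin : s ∈ I.filter (fun v => 0 < exc g v) := Finset.mem_filter.mpr ⟨hs, hse⟩
      have hsout : s ∉ I.filter (fun v => 0 < exc g' v) := by
        simp only [Finset.mem_filter, not_and]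
        intro _
        have he := hexc' s
        rw [if_pos rfl, if_neg hst] at he
        rw [he, hεeq]
        simp
      have hlt2 : (I.filter (fun v => 0 < exc g' v)).card
          < (I.filter (fun v => 0 < exc g v)).card :=
        Finset.card_lt_card ((Finset.ssubset_iff_of_subset hsub2).mpr ⟨s, hsin, hsout⟩)
      have h4 := Finset.card_le_card hsub1
      omega
    · have hεeq : ε = einf := min_eq_right hcase.le
      obtain ⟨i₀, hi₀, hieq⟩ := Finset.exists_mem_eq_inf' hne (fun i => g (p.v i) (p.v (i+1)))
      have hi₀m : i₀ < p.m := Finset.mem_range.mp hi₀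
      have hqin : (⟨p.v i₀, p.v (i₀+1)⟩ : V × V)
          ∈ Finset.univ.filter (fun q : V × V => 0 < g q.1 q.2) := by
        simp only [Finset.mem_filter, Finset.mem_univ, true_and]
        exact p.step i₀ hi₀m
      have hqout : (⟨p.v i₀, p.v (i₀+1)⟩ : V × V)
          ∉ Finset.univ.filter (fun q : V × V => 0 < g' q.1 q.2) := by
        simp only [Finset.mem_filter, Finset.mem_univ, true_and, not_lt]
        have hstep : p.IsStep (p.v i₀) (p.v (i₀+1)) := ⟨i₀, hi₀m, rfl, rfl⟩
        show g' (p.v i₀) (p.v (i₀+1)) ≤ 0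
        have he : g' (p.v i₀) (p.v (i₀+1))
            = g (p.v i₀) (p.v (i₀+1)) - ε * p.dind (p.v i₀) (p.v (i₀+1)) := rfl
        rw [he, p.dind_eq, if_pos hstep, hεeq, ← hieq]
        rw [← heinf]; simp
      have hlt1 : (Finset.univ.filter (fun q : V × V => 0 < g' q.1 q.2)).card
          < (Finset.univ.filter (fun q : V × V => 0 < g q.1 q.2)).card :=
        Finset.card_lt_card ((Finset.ssubset_iff_of_subset hsub1).mpr ⟨_, hqin, hqout⟩)
      have h4 := Finset.card_le_card hsub2
      omega
  refine ⟨g', ⟨p.cycle hm, ε, hεpos.le⟩, hflow', hdec,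
    p.cycle_visits_first hm hs, p.cycle_visits_last hm htJ, ?_, by rw [hval']; ring⟩
  intro u w
  by_cases hmem : (p.cycle hm).Mem (u, w)
  · rw [if_pos hmem]
    have hor := p.cycle_mem hm hmem
    have hsum : 1 ≤ p.dind u w + p.dind w u := by
      rcases hor with h | h
      · rw [p.dind_eq u w, if_pos h]
        have := p.dind_nonneg w u
        linarith
      · rw [p.dind_eq w u, if_pos h]
        have := p.dind_nonneg u w
        linarith
    show ε + (g u w - ε * p.dind u w + (g w u - ε * p.dind w u)) ≤ g u w + g w u
    have hmul : ε * 1 ≤ ε * (p.dind u w + p.dind w u) :=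
      mul_le_mul_of_nonneg_left hsum hεpos.le
    have hdist : ε * (p.dind u w + p.dind w u) = ε * p.dind u w + ε * p.dind w u := by ring
    linarith [hmul, hdist.symm.le]
  · rw [if_neg hmem]
    have h1 := mul_nonneg hεpos.le (p.dind_nonneg u w)
    have h2 := mul_nonneg hεpos.le (p.dind_nonneg w u)
    show 0 + (g u w - ε * p.dind u w + (g w u - ε * p.dind w u)) ≤ g u w + g w u
    linarith

lemma flow_decomp (c : V → V → ℝ) (I J : Finset V) (hd : Disjoint I J)
    (f : V → V → ℝ) (hf : IsFlow c I J f) :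
    ∃ F : List (CycleFlow V), (∀ u v, edgeLoad F u v ≤ f u v + f v u) ∧
      fval I f ≤ mflux F I J := by
  suffices h : ∀ n (g : V → V → ℝ), IsFlow c I J g → fmeasure I g ≤ n →
      ∃ F : List (CycleFlow V), (∀ u v, edgeLoad F u v ≤ g u v + g v u) ∧
        fval I g ≤ mflux F I J by
    exact h (fmeasure I f) f hf le_rfl
  intro n
  induction n with
  | zero =>
    intro g hg hμ
    by_cases hv : fval I g ≤ 0
    · refine ⟨[], ?_, ?_⟩
      · intro u v
        have := hg.nonneg u v
        have := hg.nonneg v u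
        simp only [edgeLoad, List.map_nil, List.sum_nil]
        linarith
      · simp only [mflux, List.map_nil, List.sum_nil]
        linarith
    · push_neg at hv
      obtain ⟨g', C, _, hdec, _, _, _, _⟩ := decomp_step c I J hd g hg hv
      omega
  | succ n ih =>
    intro g hg hμ
    by_cases hv : fval I g ≤ 0
    · refine ⟨[], ?_, ?_⟩
      · intro u v
        have := hg.nonneg u v
        have := hg.nonneg v u
        simp only [edgeLoad, List.map_nil, List.sum_nil]
        linarith
      · simp only [mflux, List.map_nil, List.sum_nil]
        linarith
    · push_neg at hv
      obtain ⟨g', C, hg', hdec, hvisI, hvisJ, hload, hval⟩ := decomp_step c I J hd g hg hv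
      obtain ⟨F₂, hF₂, hFval⟩ := ih g' hg' (by omega)
      refine ⟨C :: F₂, ?_, ?_⟩
      · intro u w
        have h1 : edgeLoad (C :: F₂) u w
            = (if C.cyc.Mem (u, w) then C.flux else 0) + edgeLoad F₂ u w := by
          simp [edgeLoad]
        rw [h1]
        have h2 := hF₂ u w
        have h3 := hload u w
        linarith
      · have h2 : mflux (C :: F₂) I J = C.flux + mflux F₂ I J := by
          simp [mflux, hvisI, hvisJ]
        rw [h2, hval]
        linarith [hFval]

end Aux
/-- On a symmetric directed network (the directed symmetrization of an undirected
weighted graph), the cycle-flow entropy of `I` equals the minimum edge cut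
separating `I` from `∂V ∖ I`, and the minimum is attained. -/
theorem stmt16 {V : Type*} [Fintype V] [DecidableEq V] (c : V → V → ℝ)
    (hc : ∀ u v, 0 ≤ c u v) (hsym : ∀ u v, c u v = c v u)
    (bdry I : Finset V) (hI : I ⊆ bdry) :
    IsLeast { x | ∃ W : Finset V, W ∩ bdry = I ∧ (∑ u ∈ W, ∑ v ∈ Wᶜ, c u v) = x }
      (entropy c bdry I) := by
  classical
  have hd : Disjoint I (bdry \ I) :=
    Finset.disjoint_left.mpr fun a ha hb => (Finset.mem_sdiff.mp hb).2 ha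
  set T : Finset ℝ := (Finset.univ.filter (fun W : Finset V => W ∩ bdry = I)).image (cutval c)
    with hT
  have hTne : T.Nonempty := by
    refine ⟨cutval c I, Finset.mem_image.mpr ⟨I, ?_, rfl⟩⟩
    exact Finset.mem_filter.mpr ⟨Finset.mem_univ _, Finset.inter_eq_left.mpr hI⟩
  set M : ℝ := T.min' hTne with hM
  obtain ⟨W₀, hW₀f, hW₀val⟩ : ∃ W₀ : Finset V, W₀ ∩ bdry = I ∧ cutval c W₀ = M := by
    obtain ⟨W₀, hW₀, hval⟩ := Finset.mem_image.mp (T.min'_mem hTne)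
    exact ⟨W₀, (Finset.mem_filter.mp hW₀).2, hval⟩
  have hub : ∀ x ∈ {x | ∃ F : List (CycleFlow V), Feasible c F ∧ mflux F I (bdry \ I) = x},
      x ≤ M := by
    rintro x ⟨F, hF, rfl⟩
    calc mflux F I (bdry \ I) ≤ cutval c W₀ := mflux_le_cutval c bdry I F hF W₀ hW₀f hI
      _ = M := hW₀val
  obtain ⟨f, hf, hfmax⟩ := exists_max_flow c hc I (bdry \ I)
  obtain ⟨Wr, hWrb, hWrval⟩ := max_flow_cut c hc bdry I hI f hf hfmax
  have hMle : M ≤ fval I f := by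
    rw [← hWrval]
    apply Finset.min'_le
    exact Finset.mem_image.mpr ⟨Wr, Finset.mem_filter.mpr ⟨Finset.mem_univ _, hWrb⟩, rfl⟩
  obtain ⟨g, hg, hgval, hgmix⟩ := cancel_flow c hsym I (bdry \ I) f hf
  obtain ⟨F, hFload, hFval⟩ := flow_decomp c I (bdry \ I) hd g hg
  have hFfeas : Feasible c F := fun u v => le_trans (hFload u v) (hgmix u v)
  have hFge : M ≤ mflux F I (bdry \ I) := by
    calc M ≤ fval I f := hMle
      _ = fval I g := hgval.symm
      _ ≤ mflux F I (bdry \ I) := hFval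
  have hFle : mflux F I (bdry \ I) ≤ M := hub _ ⟨F, hFfeas, rfl⟩
  have hMmem : M ∈ {x | ∃ F : List (CycleFlow V), Feasible c F ∧ mflux F I (bdry \ I) = x} :=
    ⟨F, hFfeas, le_antisymm hFle hFge⟩
  have hEQ : (bdry \ I : Finset V)
      = @SDiff.sdiff (Finset V) (@Finset.instSDiff V (fun a b => Classical.propDecidable (a = b)))
          bdry I := by
    congr
    exact Subsingleton.elim _ _
  have hent : entropy c bdry I = M := by
    unfold entropy
    rw [← hEQ]
    exact IsGreatest.csSup_eq ⟨hMmem, hub⟩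
  rw [hent]
  constructor
  · exact ⟨W₀, hW₀f, hW₀val⟩
  · rintro x ⟨W, hWb, rfl⟩
    apply Finset.min'_le
    exact Finset.mem_image.mpr ⟨W, Finset.mem_filter.mpr ⟨Finset.mem_univ _, hWb⟩, rfl⟩
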